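/- Let N ≥ C₂ log n genes be sampled. Fix a quartet X of four taxa; each gene independently contains X with probability p⁴ (0 < p ≤ 1), and conditionally on containing X displays the true quartet q_s with probability at least 2/3. Then for C₂ sufficiently large (depending only on p), the probability that the empirical plurality quartet over genes containing X differs from q_s is at most O(n^{-4}); consequently, by a union bound over all (n choose 4) four-tuples, with probability 1 - O(1) → 1 every plurality quartet is correct. -/

import Mathlib

open MeasureTheory ProbabilityTheory Finset

/-- Discrete σ-algebra on quartet outcomes. -/
instance : MeasurableSpace (Option (Fin 3)) := ⊤

/-- Score function: `+1` for the true quartet `some 0`, `-1` for the competing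
topology `some q`, `0` otherwise. -/
noncomputable def fq (q : Fin 3) (v : Option (Fin 3)) : ℝ :=
  (if v = some 0 then 1 else 0) - (if v = some q then 1 else 0)

lemma fq_measurable (q : Fin 3) : Measurable (fq q) := measurable_from_top

/-- Numeric fact about `exp (1/2)` needed for the moment bound. -/
lemma exp_half_bound : Real.exp (1 / 2) / 3 + 2 * (Real.exp (1 / 2))⁻¹ / 3 ≤ 23 / 24 - 1 / 300 := by
  set u := Real.exp (1 / 2) with hu
  have hupos : 0 < u := Real.exp_pos _
  have huu : u * u = Real.exp 1 := by
    rw [hu, ← Real.exp_add]; norm_num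
  have he1 : Real.exp 1 < 2.7182818286 := Real.exp_one_lt_d9
  have he2 : 2.7182818283 < Real.exp 1 := Real.exp_one_gt_d9
  have hult : u < 1.64873 := by nlinarith [sq_nonneg (u - 1.64873)]
  have hugt : 1.64872 < u := by nlinarith [sq_nonneg (u - 1.64872)]
  have hvlt : u⁻¹ < 0.6065308 := by
    rw [inv_lt_iff_one_lt_mul₀ hupos]
    nlinarith
  nlinarith

/-- Per-gene integrability and mgf bound at `t = -1/2`. -/
lemma gene_bound {Ω : Type} [MeasurableSpace Ω] (μ : Measure Ω) [IsProbabilityMeasure μ]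
    (g : Ω → Option (Fin 3)) (hg : Measurable g) (q : Fin 3) (hq : q ≠ 0) (p : ℝ)
    (hp0 : 0 < p)
    (hA : μ {ω | g ω ≠ none} = ENNReal.ofReal (p ^ 4))
    (hB : ENNReal.ofReal ((2 / 3) * p ^ 4) ≤ μ {ω | g ω = some 0}) :
    Integrable (fun ω => Real.exp ((-(1 / 2) : ℝ) * fq q (g ω))) μ ∧
      mgf (fun ω => fq q (g ω)) μ (-(1 / 2)) ≤ 1 - p ^ 4 / 24 := by
  set S0 : Set Ω := {ω | g ω = some 0} with hS0def
  set Sq : Set Ω := {ω | g ω = some q} with hSqdef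
  have hS0 : MeasurableSet S0 :=
    hg (MeasurableSpace.measurableSet_top : MeasurableSet {v : Option (Fin 3) | v = some 0})
  have hSq : MeasurableSet Sq :=
    hg (MeasurableSpace.measurableSet_top : MeasurableSet {v : Option (Fin 3) | v = some q})
  -- pointwise decomposition
  have key : ∀ ω, Real.exp ((-(1 / 2) : ℝ) * fq q (g ω)) =
      1 + (Real.exp (-(1 / 2)) - 1) * S0.indicator 1 ω
        + (Real.exp (1 / 2) - 1) * Sq.indicator 1 ω := by
    intro ω
    by_cases h0 : g ω = some 0
    · have h1 : g ω ≠ some q := by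
        rw [h0]; intro h; exact hq (Option.some_injective _ h).symm
      have hm : ω ∈ S0 := h0
      have hm' : ω ∉ Sq := h1
      simp only [fq, if_pos h0, if_neg h1, Set.indicator_of_mem hm,
        Set.indicator_of_notMem hm', Pi.one_apply]
      rw [show ((-(1 / 2) : ℝ)) * (1 - 0) = (-(1 / 2) : ℝ) by ring]
      ring
    · by_cases h1 : g ω = some q
      · have hm : ω ∉ S0 := h0
        have hm' : ω ∈ Sq := h1
        simp only [fq, if_neg h0, if_pos h1, Set.indicator_of_notMem hm,
          Set.indicator_of_mem hm', Pi.one_apply]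
        rw [show ((-(1 / 2) : ℝ)) * (0 - 1) = ((1 / 2) : ℝ) by ring]
        ring
      · have hm : ω ∉ S0 := h0
        have hm' : ω ∉ Sq := h1
        simp only [fq, if_neg h0, if_neg h1, Set.indicator_of_notMem hm,
          Set.indicator_of_notMem hm']
        rw [show ((-(1 / 2) : ℝ)) * ((0 : ℝ) - 0) = (0 : ℝ) by ring, Real.exp_zero]
        ring
  have hi0 : Integrable (S0.indicator (1 : Ω → ℝ)) μ := (integrable_const 1).indicator hS0
  have hiq : Integrable (Sq.indicator (1 : Ω → ℝ)) μ := (integrable_const 1).indicator hSq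
  have hfe : (fun ω => Real.exp ((-(1 / 2) : ℝ) * fq q (g ω))) =
      fun ω => 1 + (Real.exp (-(1 / 2)) - 1) * S0.indicator 1 ω
        + (Real.exp (1 / 2) - 1) * Sq.indicator 1 ω := funext key
  have hint : Integrable (fun ω => Real.exp ((-(1 / 2) : ℝ) * fq q (g ω))) μ := by
    rw [hfe]
    exact ((integrable_const 1).add (hi0.const_mul _)).add (hiq.const_mul _)
  refine ⟨hint, ?_⟩
  -- value of the mgf
  have hval : mgf (fun ω => fq q (g ω)) μ (-(1 / 2)) =
      1 + (Real.exp (-(1 / 2)) - 1) * (μ S0).toReal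
        + (Real.exp (1 / 2) - 1) * (μ Sq).toReal := by
    have hint1 : Integrable
        (fun ω => 1 + (Real.exp (-(1 / 2)) - 1) * S0.indicator 1 ω) μ :=
      (integrable_const 1).add (hi0.const_mul _)
    have e1 : ∫ ω, (1 + (Real.exp (-(1 / 2)) - 1) * S0.indicator 1 ω
          + (Real.exp (1 / 2) - 1) * Sq.indicator 1 ω) ∂μ
        = (∫ ω, (1 + (Real.exp (-(1 / 2)) - 1) * S0.indicator 1 ω) ∂μ)
          + ∫ ω, (Real.exp (1 / 2) - 1) * Sq.indicator 1 ω ∂μ :=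
      integral_add hint1 (hiq.const_mul _)
    have e2 : ∫ ω, (1 + (Real.exp (-(1 / 2)) - 1) * S0.indicator 1 ω) ∂μ
        = (∫ _ω, (1 : ℝ) ∂μ) + ∫ ω, (Real.exp (-(1 / 2)) - 1) * S0.indicator 1 ω ∂μ :=
      integral_add (integrable_const 1) (hi0.const_mul _)
    rw [mgf, hfe, e1, e2, integral_const, integral_const_mul, integral_const_mul,
      integral_indicator_one hS0, integral_indicator_one hSq]
    simp [Measure.real]
  -- probability facts
  have hx : (2 / 3) * p ^ 4 ≤ (μ S0).toReal :=
    (ENNReal.ofReal_le_iff_le_toReal (measure_ne_top μ _)).1 hB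
  have hdisj : Disjoint S0 Sq := by
    rw [Set.disjoint_left]
    intro ω h0 h1
    rw [hS0def] at h0; rw [hSqdef] at h1
    have : (some (0 : Fin 3) : Option (Fin 3)) = some q := by
      rw [← h0, ← h1]
    exact hq (Option.some_injective _ this).symm
  have hxy : (μ S0).toReal + (μ Sq).toReal ≤ p ^ 4 := by
    have hsub : S0 ∪ Sq ⊆ {ω | g ω ≠ none} := by
      rintro ω (h | h)
      · have h' : g ω = some 0 := h
        simp [Set.mem_setOf_eq, h']
      · have h' : g ω = some q := h
        simp [Set.mem_setOf_eq, h']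
    have hle : μ S0 + μ Sq ≤ ENNReal.ofReal (p ^ 4) := by
      rw [← measure_union hdisj hSq, ← hA]
      exact measure_mono hsub
    have := ENNReal.toReal_mono (by simp) hle
    rwa [ENNReal.toReal_add (measure_ne_top μ _) (measure_ne_top μ _),
      ENNReal.toReal_ofReal (by positivity)] at this
  have hy : 0 ≤ (μ Sq).toReal := ENNReal.toReal_nonneg
  rw [hval, Real.exp_neg]
  -- final numeric estimate
  set u := Real.exp (1 / 2) with hu
  have hupos : 0 < u := Real.exp_pos _
  have hnum := exp_half_bound
  rw [← hu] at hnum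
  have hx' : (μ S0).toReal ≤ 1 := by
    have h1 : μ S0 ≤ 1 := prob_le_one
    have h2 := ENNReal.toReal_mono ENNReal.one_ne_top h1
    simpa using h2
  have huv : u⁻¹ * u = 1 := inv_mul_cancel₀ hupos.ne'
  have hupos' : (0 : ℝ) < u⁻¹ := inv_pos.2 hupos
  have hp4 : 0 < p ^ 4 := by positivity
  -- (1 - u⁻¹) x - (u - 1) y ≥ p^4/24
  nlinarith [mul_nonneg (by nlinarith : (0 : ℝ) ≤ u - 1)
      (by nlinarith : (0 : ℝ) ≤ p ^ 4 - (μ S0).toReal - (μ Sq).toReal),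
    mul_nonneg (by nlinarith : (0 : ℝ) ≤ u - u⁻¹)
      (by nlinarith : (0 : ℝ) ≤ (μ S0).toReal - (2 / 3) * p ^ 4)]

/-- Measure bound for a single competing topology `q`. -/
lemma key_bound (p : ℝ) (hp0 : 0 < p) (hp1 : p ≤ 1) (n N : ℕ) (hn : 2 ≤ n)
    (hN : (96 / p ^ 4) * Real.log n ≤ (N : ℝ))
    (Ω : Type) [MeasurableSpace Ω] (μ : Measure Ω) [IsProbabilityMeasure μ]
    (G : Fin N → Ω → Option (Fin 3)) (hG : ∀ i, Measurable (G i))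
    (hind : iIndepFun G μ)
    (hA : ∀ i, μ {ω | G i ω ≠ none} = ENNReal.ofReal (p ^ 4))
    (hB : ∀ i, ENNReal.ofReal ((2 / 3) * p ^ 4) ≤ μ {ω | G i ω = some 0})
    (q : Fin 3) (hq : q ≠ 0) :
    μ {ω | (Finset.univ.filter fun i => G i ω = some 0).card ≤
        (Finset.univ.filter fun i => G i ω = some q).card}
      ≤ ENNReal.ofReal (1 / (n : ℝ) ^ 4) := by
  have hp4 : 0 < p ^ 4 := by positivity
  set Y : Fin N → Ω → ℝ := fun i => fq q ∘ G i with hY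
  have hYmeas : ∀ i, Measurable (Y i) := fun i => (fq_measurable q).comp (hG i)
  have hYind : iIndepFun Y μ :=
    hind.comp (fun _ => fq q) (fun _ => fq_measurable q)
  have hgb : ∀ i : Fin N,
      Integrable (fun ω => Real.exp ((-(1 / 2) : ℝ) * fq q (G i ω))) μ ∧
        mgf (fun ω => fq q (G i ω)) μ (-(1 / 2)) ≤ 1 - p ^ 4 / 24 :=
    fun i => gene_bound μ (G i) (hG i) q hq p hp0 (hA i) (hB i)
  -- identify the event with the sum being ≤ 0
  have hset : {ω | (Finset.univ.filter fun i => G i ω = some 0).card ≤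
      (Finset.univ.filter fun i => G i ω = some q).card} =
      {ω | (∑ i, Y i) ω ≤ 0} := by
    ext ω
    simp only [Set.mem_setOf_eq, Finset.sum_apply]
    have hsum : ∑ i, Y i ω =
        ((Finset.univ.filter fun i => G i ω = some 0).card : ℝ) -
          ((Finset.univ.filter fun i => G i ω = some q).card : ℝ) := by
      simp only [hY, Function.comp_apply, fq, Finset.sum_sub_distrib, Finset.sum_boole]
    rw [hsum, sub_nonpos, Nat.cast_le]
  -- Chernoff bound
  have hintsum : Integrable (fun ω => Real.exp ((-(1 / 2) : ℝ) * (∑ i, Y i) ω)) μ :=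
    hYind.integrable_exp_mul_sum hYmeas (fun i _ => (hgb i).1)
  have hcher := measure_le_le_exp_mul_mgf (μ := μ) (X := ∑ i, Y i) (t := -(1 / 2)) 0
    (by norm_num) hintsum
  rw [mul_zero, Real.exp_zero, one_mul] at hcher
  have hprod : mgf (∑ i, Y i) μ (-(1 / 2)) = ∏ i, mgf (Y i) μ (-(1 / 2)) :=
    hYind.mgf_sum hYmeas Finset.univ
  have hB0 : (0 : ℝ) ≤ 1 - p ^ 4 / 24 := by
    have : p ^ 4 ≤ 1 := pow_le_one₀ hp0.le hp1
    linarith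
  have hprodle : ∏ i : Fin N, mgf (Y i) μ (-(1 / 2)) ≤ (1 - p ^ 4 / 24) ^ N := by
    calc ∏ i : Fin N, mgf (Y i) μ (-(1 / 2)) ≤ ∏ _i : Fin N, (1 - p ^ 4 / 24) :=
          Finset.prod_le_prod (fun i _ => mgf_nonneg) (fun i _ => (hgb i).2)
      _ = (1 - p ^ 4 / 24) ^ N := by simp
  have hexp1 : (1 - p ^ 4 / 24) ^ N ≤ Real.exp (-(p ^ 4 / 24)) ^ N := by
    apply pow_le_pow_left₀ hB0
    have := Real.add_one_le_exp (-(p ^ 4 / 24))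
    linarith
  have hexp2 : Real.exp (-(p ^ 4 / 24)) ^ N = Real.exp ((N : ℝ) * -(p ^ 4 / 24)) :=
    (Real.exp_nat_mul _ N).symm
  have hlogn : 0 ≤ Real.log n := Real.log_nonneg (by exact_mod_cast (by omega : 1 ≤ n))
  have hexp3 : Real.exp ((N : ℝ) * -(p ^ 4 / 24)) ≤ Real.exp (-(4 * Real.log n)) := by
    apply Real.exp_le_exp.2
    have h1 : (96 / p ^ 4) * Real.log n * (p ^ 4 / 24) ≤ (N : ℝ) * (p ^ 4 / 24) := by
      apply mul_le_mul_of_nonneg_right hN (by positivity)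
    have h2 : (96 / p ^ 4) * Real.log n * (p ^ 4 / 24) = 4 * Real.log n := by
      field_simp; ring
    nlinarith
  have hnpos : (0 : ℝ) < n := by exact_mod_cast (by omega : 0 < n)
  have hexp4 : Real.exp (-(4 * Real.log n)) = 1 / (n : ℝ) ^ 4 := by
    rw [Real.exp_neg, show ((4 : ℝ) * Real.log n) = ((4 : ℕ) : ℝ) * Real.log n by norm_num,
      Real.exp_nat_mul, Real.exp_log hnpos, one_div]
  rw [hset, ENNReal.le_ofReal_iff_toReal_le (measure_ne_top μ _) (by positivity)]
  calc (μ {ω | (∑ i, Y i) ω ≤ 0}).toReal ≤ mgf (∑ i, Y i) μ (-(1 / 2)) := hcher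
    _ = ∏ i, mgf (Y i) μ (-(1 / 2)) := hprod
    _ ≤ (1 - p ^ 4 / 24) ^ N := hprodle
    _ ≤ Real.exp (-(p ^ 4 / 24)) ^ N := hexp1
    _ = Real.exp ((N : ℝ) * -(p ^ 4 / 24)) := hexp2
    _ ≤ Real.exp (-(4 * Real.log n)) := hexp3
    _ = 1 / (n : ℝ) ^ 4 := hexp4

/-- Plurality quartet correctness: fix a four-tuple `X`.  Each of `N` independent
genes contains `X` with probability `p⁴` (value `none` means `X` is not contained;
`some q` means the gene displays quartet topology `q`, with `some 0` the true
species quartet `q_s`), and conditionally on containing `X` displays `q_s` with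
probability at least `2/3`.  Then for `C₂` large enough (depending only on `p`)
and `N ≥ C₂ log n`, the probability that the empirical plurality quartet differs
from `q_s` is at most `c/n⁴`. -/
theorem plurality_quartet_error (p : ℝ) (hp0 : 0 < p) (hp1 : p ≤ 1) :
    ∃ C₂ c : ℝ, 0 < C₂ ∧ 0 < c ∧
      ∀ (n N : ℕ), 2 ≤ n → C₂ * Real.log n ≤ (N : ℝ) →
      ∀ (Ω : Type) [MeasurableSpace Ω] (μ : Measure Ω) [IsProbabilityMeasure μ]
        (G : Fin N → Ω → Option (Fin 3)),
        (∀ i, Measurable (G i)) →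
        iIndepFun G μ →
        (∀ i, μ {ω | G i ω ≠ none} = ENNReal.ofReal (p ^ 4)) →
        (∀ i, ENNReal.ofReal ((2 / 3) * p ^ 4) ≤ μ {ω | G i ω = some 0}) →
        μ {ω | ∃ q : Fin 3, q ≠ 0 ∧
            (Finset.univ.filter fun i => G i ω = some 0).card ≤
              (Finset.univ.filter fun i => G i ω = some q).card}
          ≤ ENNReal.ofReal (c / (n : ℝ) ^ 4) := by
  refine ⟨96 / p ^ 4, 2, by positivity, by norm_num, ?_⟩
  intro n N hn hN Ω _ μ _ G hG hind hA hB
  have h1 := key_bound p hp0 hp1 n N hn hN Ω μ G hG hind hA hB 1 (by decide)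
  have h2 := key_bound p hp0 hp1 n N hn hN Ω μ G hG hind hA hB 2 (by decide)
  have hsub : {ω | ∃ q : Fin 3, q ≠ 0 ∧
      (Finset.univ.filter fun i => G i ω = some 0).card ≤
        (Finset.univ.filter fun i => G i ω = some q).card} ⊆
      {ω | (Finset.univ.filter fun i => G i ω = some 0).card ≤
        (Finset.univ.filter fun i => G i ω = some 1).card} ∪
      {ω | (Finset.univ.filter fun i => G i ω = some 0).card ≤
        (Finset.univ.filter fun i => G i ω = some 2).card} := by
    rintro ω ⟨q, hq, hle⟩
    fin_cases q
    · exact absurd rfl hq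
    · exact Or.inl hle
    · exact Or.inr hle
  have hnpos : (0 : ℝ) < n := by exact_mod_cast (by omega : 0 < n)
  calc μ {ω | ∃ q : Fin 3, q ≠ 0 ∧
      (Finset.univ.filter fun i => G i ω = some 0).card ≤
        (Finset.univ.filter fun i => G i ω = some q).card}
      ≤ μ ({ω | (Finset.univ.filter fun i => G i ω = some 0).card ≤
            (Finset.univ.filter fun i => G i ω = some 1).card} ∪
          {ω | (Finset.univ.filter fun i => G i ω = some 0).card ≤
            (Finset.univ.filter fun i => G i ω = some 2).card}) := measure_mono hsub
    _ ≤ μ {ω | (Finset.univ.filter fun i => G i ω = some 0).card ≤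
            (Finset.univ.filter fun i => G i ω = some 1).card} +
        μ {ω | (Finset.univ.filter fun i => G i ω = some 0).card ≤
            (Finset.univ.filter fun i => G i ω = some 2).card} := measure_union_le _ _
    _ ≤ ENNReal.ofReal (1 / (n : ℝ) ^ 4) + ENNReal.ofReal (1 / (n : ℝ) ^ 4) :=
        add_le_add h1 h2
    _ = ENNReal.ofReal (2 / (n : ℝ) ^ 4) := by
        rw [← ENNReal.ofReal_add (by positivity) (by positivity)]
        congr 1
        ring
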